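/- (General construction of variance-stabilizing weights.) Suppose the Riesz representers satisfy $\mathbb{E}_{t-1}[|\gamma_t|^{2+\delta}] / \mathbb{E}_{t-1}[\gamma_t^2]^{2+\delta} \leq C$ and $\mathbb{E}_{t-1}[\gamma_t^2] \leq C' t^{\alpha}$ for all $t$, for some $\delta>0$, $\alpha \in [0, \delta/(2+\delta))$, and positive constants $C, C'$. Then the variance-stabilizing weights defined by the recursion $h_t^2\,\mathbb{E}_{t-1}[\gamma_t^2] = (1 - \sum_{s=1}^{t-1} h_s^2\,\mathbb{E}_{s-1}[\gamma_s^2])\,\lambda_t$ satisfy the general infinite sampling, variance convergence, and bounded moments conditions, provided the allocation rate satisfies $\lambda_t < 1$ for $t<T$, $\lambda_T = 1$, and $\frac{1}{1+T-t} \leq \lambda_t \leq C''\,\frac{\mathbb{E}_{t-1}[\gamma_t^2]^{-1}}{t^{-\alpha} + T^{1-\alpha} - t^{1-\alpha}}$ for some positive constant $C''$. -/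

import Mathlib

open MeasureTheory ProbabilityTheory Filter Finset Topology

lemma pullout_aux {Ω : Type*} [m0 : MeasurableSpace Ω] {μ : Measure Ω}
    [IsProbabilityMeasure μ] {m : MeasurableSpace Ω} (hm : m ≤ m0) {f X : Ω → ℝ}
    (hf : StronglyMeasurable[m] f) (hX : Integrable X μ) (hX0 : 0 ≤ᵐ[μ] X)
    (hbdd : ∀ᵐ ω ∂μ, f ω ^ 2 * (μ[X|m]) ω ≤ 1) :
    Integrable (fun ω => f ω ^ 2 * X ω) μ ∧
      Integrable (fun ω => f ω ^ 2 * (μ[X|m]) ω) μ ∧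
      ∫ ω, f ω ^ 2 * X ω ∂μ = ∫ ω, f ω ^ 2 * (μ[X|m]) ω ∂μ := by
  have hG0 : 0 ≤ᵐ[μ] μ[X|m] := condExp_nonneg hX0
  have hf2 : StronglyMeasurable[m] (fun ω => f ω ^ 2) := hf.pow 2
  set g : ℕ → Ω → ℝ := fun n ω => min (f ω ^ 2) n with hgdef
  have hgm : ∀ n, StronglyMeasurable[m] (g n) := fun n => hf2.inf (stronglyMeasurable_const (b := (n:ℝ)))
  have hgnn : ∀ n ω, 0 ≤ g n ω := fun n ω => le_min (sq_nonneg _) (Nat.cast_nonneg n)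
  have hgb : ∀ n : ℕ, ∃ c : ℝ, ∀ ω, ‖g n ω‖ ≤ c := fun n => ⟨n, fun ω => by
    rw [Real.norm_eq_abs, abs_of_nonneg (hgnn n ω)]; exact min_le_right _ _⟩
  have hgX_int : ∀ n, Integrable (fun ω => g n ω * X ω) μ := fun n =>
    hX.bdd_mul ((hgm n).mono hm).aestronglyMeasurable (ae_of_all μ (hgb n).choose_spec)
  have hgG_int : ∀ n, Integrable (fun ω => g n ω * (μ[X|m]) ω) μ := fun n =>
    integrable_condExp.bdd_mul ((hgm n).mono hm).aestronglyMeasurable (ae_of_all μ (hgb n).choose_spec)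
  have hpull : ∀ n, ∫ ω, g n ω * X ω ∂μ = ∫ ω, g n ω * (μ[X|m]) ω ∂μ := by
    intro n
    have h1 : μ[(fun ω => g n ω * X ω)|m] =ᵐ[μ] fun ω => g n ω * (μ[X|m]) ω :=
      condExp_mul_of_stronglyMeasurable_left (hgm n) (hgX_int n) hX
    calc ∫ ω, g n ω * X ω ∂μ = ∫ ω, (μ[(fun ω => g n ω * X ω)|m]) ω ∂μ :=
          (integral_condExp hm).symm
      _ = _ := integral_congr_ae h1
  have hle1 : ∀ n, ∫ ω, g n ω * X ω ∂μ ≤ 1 := by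
    intro n
    rw [hpull n]
    calc ∫ ω, g n ω * (μ[X|m]) ω ∂μ ≤ ∫ _ω, (1:ℝ) ∂μ := by
          refine integral_mono_ae (hgG_int n) (integrable_const 1) ?_
          filter_upwards [hbdd, hG0] with ω h1 h2
          exact le_trans (mul_le_mul_of_nonneg_right (min_le_left _ _) h2) h1
      _ = 1 := by simp
  have hmeas : AEStronglyMeasurable[m0] (fun ω => f ω ^ 2 * X ω) μ :=
    ((hf2.mono hm).aestronglyMeasurable).mul hX.1
  have hnn : 0 ≤ᵐ[μ] fun ω => f ω ^ 2 * X ω := hX0.mono fun ω h => mul_nonneg (sq_nonneg _) h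
  have hfin : HasFiniteIntegral (fun ω => f ω ^ 2 * X ω) μ := by
    rw [hasFiniteIntegral_iff_ofReal hnn]
    have hmono : ∀ᵐ ω ∂μ, Monotone fun n : ℕ => ENNReal.ofReal (g n ω * X ω) := by
      filter_upwards [hX0] with ω hXω
      intro i j hij
      exact ENNReal.ofReal_le_ofReal (mul_le_mul_of_nonneg_right
        (min_le_min le_rfl (Nat.cast_le.2 hij)) hXω)
    have hsup : ∀ᵐ ω ∂μ,
        (⨆ n : ℕ, ENNReal.ofReal (g n ω * X ω)) = ENNReal.ofReal (f ω ^ 2 * X ω) := by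
      filter_upwards [hX0] with ω hXω
      refine le_antisymm (iSup_le fun n => ENNReal.ofReal_le_ofReal
        (mul_le_mul_of_nonneg_right (min_le_left _ _) hXω)) ?_
      have hgc : g ⌈f ω ^ 2⌉₊ ω = f ω ^ 2 := min_eq_left (Nat.le_ceil _)
      calc ENNReal.ofReal (f ω ^ 2 * X ω)
          = ENNReal.ofReal (g ⌈f ω ^ 2⌉₊ ω * X ω) := by rw [hgc]
        _ ≤ _ := le_iSup (fun n => ENNReal.ofReal (g n ω * X ω)) _
    calc ∫⁻ ω, ENNReal.ofReal (f ω ^ 2 * X ω) ∂μ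
        = ∫⁻ ω, ⨆ n : ℕ, ENNReal.ofReal (g n ω * X ω) ∂μ :=
          lintegral_congr_ae (hsup.mono fun ω hω => hω.symm)
      _ = ⨆ n : ℕ, ∫⁻ ω, ENNReal.ofReal (g n ω * X ω) ∂μ :=
          lintegral_iSup' (fun n => ((hgX_int n).1.aemeasurable).ennreal_ofReal) hmono
      _ ≤ 1 := iSup_le fun n => by
          rw [← ofReal_integral_eq_lintegral_ofReal (hgX_int n)
            (hX0.mono fun ω hω => mul_nonneg (hgnn n ω) hω)]
          exact ENNReal.ofReal_le_one.mpr (hle1 n)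
      _ < ⊤ := ENNReal.one_lt_top
  have hint : Integrable (fun ω => f ω ^ 2 * X ω) μ := ⟨hmeas, hfin⟩
  have hpull2 : μ[(fun ω => f ω ^ 2 * X ω)|m] =ᵐ[μ] fun ω => f ω ^ 2 * (μ[X|m]) ω :=
    condExp_mul_of_stronglyMeasurable_left hf2 hint hX
  refine ⟨hint, integrable_condExp.congr hpull2, ?_⟩
  calc ∫ ω, f ω ^ 2 * X ω ∂μ = ∫ ω, (μ[(fun ω => f ω ^ 2 * X ω)|m]) ω ∂μ :=
        (integral_condExp hm).symm
    _ = _ := integral_congr_ae hpull2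

lemma phi_lower {α : ℝ} (hα0 : 0 ≤ α) (hα1 : α < 1) {t T : ℕ}
    (ht : 1 ≤ t) (htT : t ≤ T) :
    (1 - α) * (T:ℝ) ^ (-α) * (1 + (T:ℝ) - (t:ℝ)) ≤
      (t:ℝ) ^ (-α) + (T:ℝ) ^ ((1:ℝ) - α) - (t:ℝ) ^ ((1:ℝ) - α) := by
  have ht0 : (0:ℝ) < t := by exact_mod_cast ht
  have hT0 : (0:ℝ) < T := lt_of_lt_of_le ht0 (by exact_mod_cast htT)
  have htT' : (t:ℝ) ≤ T := by exact_mod_cast htT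
  have h1 : (T:ℝ) ^ (-α) ≤ (t:ℝ) ^ (-α) :=
    Real.rpow_le_rpow_of_nonpos ht0 htT' (neg_nonpos.mpr hα0)
  have hs : -1 ≤ (t:ℝ)/T - 1 := by
    have : (0:ℝ) ≤ (t:ℝ)/T := by positivity
    linarith
  have hb := rpow_one_add_le_one_add_mul_self hs (by linarith : (0:ℝ) ≤ 1 - α)
    (by linarith : (1:ℝ) - α ≤ 1)
  rw [show (1:ℝ) + ((t:ℝ)/T - 1) = (t:ℝ)/T by ring] at hb
  have hTp : (0:ℝ) < (T:ℝ) ^ ((1:ℝ) - α) := Real.rpow_pos_of_pos hT0 _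
  have hrw : ((t:ℝ)/T) ^ ((1:ℝ)-α) = (t:ℝ)^((1:ℝ)-α) / (T:ℝ)^((1:ℝ)-α) :=
    Real.div_rpow ht0.le hT0.le _
  have hK : (T:ℝ)^(-α) * T = (T:ℝ)^((1:ℝ)-α) := by
    have h2 := (Real.rpow_add hT0 (-α) 1).symm
    rw [Real.rpow_one] at h2
    rw [h2]; congr 1; ring
  have hb2 : (t:ℝ)^((1:ℝ)-α) ≤ (1 + (1-α) * ((t:ℝ)/T - 1)) * (T:ℝ)^((1:ℝ)-α) := by
    calc (t:ℝ)^((1:ℝ)-α) = ((t:ℝ)/T)^((1:ℝ)-α) * (T:ℝ)^((1:ℝ)-α) := by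
          rw [hrw, div_mul_cancel₀ _ hTp.ne']
      _ ≤ _ := mul_le_mul_of_nonneg_right hb hTp.le
  have hexp : (1 + (1-α) * ((t:ℝ)/T - 1)) * (T:ℝ)^((1:ℝ)-α) =
      (T:ℝ)^((1:ℝ)-α) + (1-α)*((t:ℝ)-T)*(T:ℝ)^(-α) := by
    rw [← hK]; field_simp
  rw [hexp] at hb2
  have hA : (0:ℝ) < (T:ℝ)^(-α) := Real.rpow_pos_of_pos hT0 _
  nlinarith [mul_nonneg hα0 hA.le]

lemma stick_lemma {T : ℕ} (hT : 1 ≤ T) {α δ C C'' : ℝ} (hα0 : 0 ≤ α) (hα1 : α < 1)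
    (hδ : 0 < δ) (hC : 0 < C) (hC'' : 0 < C'')
    (H G L K : ℕ → ℝ)
    (hH0 : ∀ t, 0 ≤ H t)
    (hrec : ∀ t, 1 ≤ t → t ≤ T →
      H t ^ 2 * G t = (1 - ∑ s ∈ Finset.Icc 1 (t-1), H s ^ 2 * G s) * L t)
    (hlow : ∀ t, 1 ≤ t → t ≤ T → 1 / (1 + (T:ℝ) - t) ≤ L t)
    (hup : ∀ t, 1 ≤ t → t ≤ T →
      L t ≤ C'' * (G t)⁻¹ / ((t:ℝ)^(-α) + (T:ℝ)^((1:ℝ)-α) - (t:ℝ)^((1:ℝ)-α)))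
    (hlt : ∀ t, 1 ≤ t → t < T → L t < 1)
    (hlast : L T = 1)
    (hratio : ∀ t, 1 ≤ t → t ≤ T → K t / (G t) ^ ((2:ℝ)+δ) ≤ C) :
    (∑ t ∈ Finset.Icc 1 T, H t ^ 2 * G t = 1) ∧
    (∀ t ∈ Finset.Icc 1 T, H t ^ 2 * G t ≤ 1) ∧
    (Real.sqrt ((1-α) * (T:ℝ)^((1:ℝ)-α) / C'') ≤ ∑ t ∈ Finset.Icc 1 T, H t) ∧
    (∑ t ∈ Finset.Icc 1 T, H t ^ ((2:ℝ)+δ) * K t ≤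
      (T:ℝ) * (C * (C'' * (T:ℝ)^(α-1) / (1-α)) ^ ((1:ℝ)+δ/2))) := by
  have hT0 : (0:ℝ) < T := by exact_mod_cast hT
  have h1α : (0:ℝ) < 1 - α := by linarith
  have hP : (0:ℝ) < (T:ℝ)^((1:ℝ)-α) := Real.rpow_pos_of_pos hT0 _
  have hB : (0:ℝ) < (T:ℝ)^(α-1) := Real.rpow_pos_of_pos hT0 _
  have hA : (0:ℝ) < (T:ℝ)^(-α) := Real.rpow_pos_of_pos hT0 _
  have e1 : (T:ℝ)^(-α) * T = (T:ℝ)^((1:ℝ)-α) := by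
    have h2 := (Real.rpow_add hT0 (-α) 1).symm
    rw [Real.rpow_one] at h2
    rw [h2]; congr 1; ring
  have e2 : (T:ℝ)^((1:ℝ)-α) * (T:ℝ)^(α-1) = 1 := by
    rw [← Real.rpow_add hT0]; norm_num
  -- the stick-breaking induction
  have claim : ∀ u, u ≤ T →
      0 ≤ 1 - ∑ s ∈ Finset.Icc 1 u, H s ^ 2 * G s ∧
      (1 - ∑ s ∈ Finset.Icc 1 u, H s ^ 2 * G s) * T ≤ (T:ℝ) - u ∧
      (u < T → 0 < 1 - ∑ s ∈ Finset.Icc 1 u, H s ^ 2 * G s) ∧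
      (u = T → 1 - ∑ s ∈ Finset.Icc 1 u, H s ^ 2 * G s = 0) := by
    intro u
    induction u with
    | zero =>
      intro _
      rw [show Finset.Icc 1 0 = (∅ : Finset ℕ) from Finset.Icc_eq_empty (by omega)]
      simp only [Finset.sum_empty]
      refine ⟨by norm_num, by norm_num, fun _ => by norm_num, fun h => absurd h.symm (by omega)⟩
    | succ n ih =>
      intro hn1
      obtain ⟨h0, hTb, hpos, -⟩ := ih (by omega)
      have hrecn := hrec (n+1) (by omega) hn1
      rw [show n + 1 - 1 = n from rfl] at hrecn
      rw [Finset.sum_Icc_succ_top (by omega : 1 ≤ n + 1)]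
      set Sn := ∑ s ∈ Finset.Icc 1 n, H s ^ 2 * G s with hSn
      have hRn : 0 < 1 - Sn := hpos (by omega)
      have hLlow := hlow (n+1) (by omega) hn1
      have hk : (1:ℝ) ≤ (T:ℝ) - n := by
        have : ((n:ℝ)+1) ≤ T := by exact_mod_cast hn1
        linarith
      have hklam : 1 ≤ L (n+1) * ((T:ℝ) - n) := by
        have hkeq : 1 + (T:ℝ) - ((n:ℕ)+1:ℕ) = (T:ℝ) - n := by push_cast; ring
        rw [hkeq] at hLlow
        exact (div_le_iff₀ (by linarith)).mp hLlow
      have hLle : L (n+1) ≤ 1 := by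
        rcases lt_or_eq_of_le hn1 with hlt' | heq
        · exact (hlt (n+1) (by omega) hlt').le
        · rw [heq, hlast]
      refine ⟨?_, ?_, ?_, ?_⟩
      · rw [hrecn]; nlinarith [mul_nonneg hRn.le (by linarith : (0:ℝ) ≤ 1 - L (n+1))]
      · rw [hrecn]
        push_cast
        nlinarith [mul_le_mul_of_nonneg_right hTb (by linarith : (0:ℝ) ≤ 1 - L (n+1))]
      · intro hsucclt
        rw [hrecn]
        have hL1 : L (n+1) < 1 := hlt (n+1) (by omega) hsucclt
        nlinarith [mul_pos hRn (by linarith : (0:ℝ) < 1 - L (n+1))]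
      · intro heq
        have : L (n+1) = 1 := by rw [heq, hlast]
        rw [hrecn, this]; ring
  have hsum1 : ∑ t ∈ Finset.Icc 1 T, H t ^ 2 * G t = 1 := by
    have := (claim T le_rfl).2.2.2 rfl
    linarith
  -- per-t facts
  have pert : ∀ t, 1 ≤ t → t ≤ T →
      0 < H t ^ 2 * G t ∧ 0 < G t ∧
      (H t ^ 2 * G t) * G t ≤ C'' * (T:ℝ)^(α-1) / (1-α) := by
    intro t ht1 htT
    obtain ⟨hR0, hRT, hRpos, -⟩ := claim (t-1) (by omega)
    have hRp : 0 < 1 - ∑ s ∈ Finset.Icc 1 (t-1), H s ^ 2 * G s := hRpos (by omega)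
    have hrect := hrec t ht1 htT
    have hLlow := hlow t ht1 htT
    have hkpos : (0:ℝ) < 1 + (T:ℝ) - t := by
      have : (t:ℝ) ≤ T := by exact_mod_cast htT
      linarith
    have hLpos : 0 < L t := lt_of_lt_of_le (by positivity) hLlow
    have hDpos : 0 < H t ^ 2 * G t := by rw [hrect]; exact mul_pos hRp hLpos
    have hGpos : 0 < G t := by
      by_contra hG
      push_neg at hG
      exact absurd hDpos (not_lt.mpr (mul_nonpos_of_nonneg_of_nonpos (sq_nonneg _) hG))
    refine ⟨hDpos, hGpos, ?_⟩
    have hΦlb : (1-α) * (T:ℝ)^(-α) * (1 + (T:ℝ) - t) ≤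
        (t:ℝ)^(-α) + (T:ℝ)^((1:ℝ)-α) - (t:ℝ)^((1:ℝ)-α) := phi_lower hα0 hα1 ht1 htT
    have hΦpos : 0 < (t:ℝ)^(-α) + (T:ℝ)^((1:ℝ)-α) - (t:ℝ)^((1:ℝ)-α) :=
      lt_of_lt_of_le (by positivity) hΦlb
    have hLΦ : L t * ((t:ℝ)^(-α) + (T:ℝ)^((1:ℝ)-α) - (t:ℝ)^((1:ℝ)-α)) ≤ C'' * (G t)⁻¹ :=
      (le_div_iff₀ hΦpos).mp (hup t ht1 htT)
    have hLΦG : L t * ((t:ℝ)^(-α) + (T:ℝ)^((1:ℝ)-α) - (t:ℝ)^((1:ℝ)-α)) * G t ≤ C'' := by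
      have h3 := mul_le_mul_of_nonneg_right hLΦ hGpos.le
      rwa [mul_assoc C'', inv_mul_cancel₀ hGpos.ne', mul_one] at h3
    have hLGnn : 0 ≤ L t * G t := mul_nonneg hLpos.le hGpos.le
    have step1 : L t * G t * ((1-α) * (T:ℝ)^(-α) * (1 + (T:ℝ) - t)) ≤ C'' := by
      calc L t * G t * ((1-α) * (T:ℝ)^(-α) * (1 + (T:ℝ) - t))
          ≤ L t * G t * ((t:ℝ)^(-α) + (T:ℝ)^((1:ℝ)-α) - (t:ℝ)^((1:ℝ)-α)) :=
            mul_le_mul_of_nonneg_left hΦlb hLGnn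
        _ = L t * ((t:ℝ)^(-α) + (T:ℝ)^((1:ℝ)-α) - (t:ℝ)^((1:ℝ)-α)) * G t := by ring
        _ ≤ C'' := hLΦG
    have hcast : ((t-1:ℕ):ℝ) = (t:ℝ) - 1 := by
      have := Nat.cast_sub ht1 (R := ℝ)
      simpa using this
    have hRk : (1 - ∑ s ∈ Finset.Icc 1 (t-1), H s ^ 2 * G s) * T ≤ 1 + (T:ℝ) - t := by
      rw [hcast] at hRT; linarith
    have c0 : 0 ≤ L t * G t * (1-α) * (T:ℝ)^(-α) :=
      mul_nonneg (mul_nonneg hLGnn h1α.le) hA.le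
    have step2 : (1 - ∑ s ∈ Finset.Icc 1 (t-1), H s ^ 2 * G s) * (L t * G t) *
        ((1-α) * ((T:ℝ)^(-α) * T)) ≤ C'' := by
      calc (1 - ∑ s ∈ Finset.Icc 1 (t-1), H s ^ 2 * G s) * (L t * G t) *
            ((1-α) * ((T:ℝ)^(-α) * T))
          = (L t * G t * (1-α) * (T:ℝ)^(-α)) *
            ((1 - ∑ s ∈ Finset.Icc 1 (t-1), H s ^ 2 * G s) * T) := by ring
        _ ≤ (L t * G t * (1-α) * (T:ℝ)^(-α)) * (1 + (T:ℝ) - t) :=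
            mul_le_mul_of_nonneg_left hRk c0
        _ = L t * G t * ((1-α) * (T:ℝ)^(-α) * (1 + (T:ℝ) - t)) := by ring
        _ ≤ C'' := step1
    rw [e1] at step2
    rw [le_div_iff₀ h1α, hrect]
    have h5 := mul_le_mul_of_nonneg_right step2 hB.le
    have e3 : (1 - ∑ s ∈ Finset.Icc 1 (t-1), H s ^ 2 * G s) * (L t * G t) *
        ((1-α) * (T:ℝ)^((1:ℝ)-α)) * (T:ℝ)^(α-1) =
        (1 - ∑ s ∈ Finset.Icc 1 (t-1), H s ^ 2 * G s) * L t * G t * (1-α) := by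
      rw [show (1 - ∑ s ∈ Finset.Icc 1 (t-1), H s ^ 2 * G s) * (L t * G t) *
        ((1-α) * (T:ℝ)^((1:ℝ)-α)) * (T:ℝ)^(α-1) =
        ((1 - ∑ s ∈ Finset.Icc 1 (t-1), H s ^ 2 * G s) * L t * G t * (1-α)) *
        ((T:ℝ)^((1:ℝ)-α) * (T:ℝ)^(α-1)) from by ring, e2, mul_one]
    rw [← e3]
    exact h5
  -- conclusion 2 : each D_t ≤ 1
  have hDle1 : ∀ t ∈ Finset.Icc 1 T, H t ^ 2 * G t ≤ 1 := by
    intro t ht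
    rw [← hsum1]
    refine Finset.single_le_sum (f := fun s => H s ^ 2 * G s) (fun s hs => ?_) ht
    obtain ⟨hs1, hs2⟩ := Finset.mem_Icc.mp hs
    exact (pert s hs1 hs2).1.le
  refine ⟨hsum1, hDle1, ?_, ?_⟩
  -- conclusion 3 : lower bound on ∑ H
  · set κ := Real.sqrt ((1-α) * (T:ℝ)^((1:ℝ)-α) / C'') with hκdef
    have hκ0 : 0 ≤ κ := Real.sqrt_nonneg _
    have hκsq : κ ^ 2 = (1-α) * (T:ℝ)^((1:ℝ)-α) / C'' := Real.sq_sqrt (by positivity)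
    have hκβ : κ ^ 2 * (C'' * (T:ℝ)^(α-1) / (1-α)) = 1 := by
      rw [hκsq]
      rw [show (1-α) * (T:ℝ)^((1:ℝ)-α) / C'' * (C'' * (T:ℝ)^(α-1) / (1-α)) =
        ((T:ℝ)^((1:ℝ)-α) * (T:ℝ)^(α-1)) * ((1-α)/(1-α)) * (C''/C'') from by ring,
        e2, div_self h1α.ne', div_self hC''.ne']
      ring
    have hper : ∀ t ∈ Finset.Icc 1 T, κ * (H t ^ 2 * G t) ≤ H t := by
      intro t ht
      obtain ⟨ht1, ht2⟩ := Finset.mem_Icc.mp ht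
      obtain ⟨hDpos, hGpos, hDG⟩ := pert t ht1 ht2
      have h6 : κ ^ 2 * ((H t ^ 2 * G t) * G t) ≤ 1 := by
        calc κ ^ 2 * ((H t ^ 2 * G t) * G t) ≤ κ ^ 2 * (C'' * (T:ℝ)^(α-1) / (1-α)) :=
              mul_le_mul_of_nonneg_left hDG (sq_nonneg κ)
          _ = 1 := hκβ
      have h7 : (κ * (H t ^ 2 * G t)) ^ 2 ≤ H t ^ 2 := by
        calc (κ * (H t ^ 2 * G t)) ^ 2
            = H t ^ 2 * (κ ^ 2 * ((H t ^ 2 * G t) * G t)) := by ring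
          _ ≤ H t ^ 2 * 1 := mul_le_mul_of_nonneg_left h6 (sq_nonneg _)
          _ = H t ^ 2 := mul_one _
      have h8 := Real.sqrt_le_sqrt h7
      rwa [Real.sqrt_sq (mul_nonneg hκ0 hDpos.le), Real.sqrt_sq (hH0 t)] at h8
    have h13 : κ * ∑ t ∈ Finset.Icc 1 T, (H t ^ 2 * G t) ≤ ∑ t ∈ Finset.Icc 1 T, H t := by
      rw [Finset.mul_sum]
      exact Finset.sum_le_sum hper
    rwa [hsum1, mul_one] at h13
  -- conclusion 4 : bounded moments
  · have hterm : ∀ t ∈ Finset.Icc 1 T, H t ^ ((2:ℝ)+δ) * K t ≤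
        C * (C'' * (T:ℝ)^(α-1) / (1-α)) ^ ((1:ℝ)+δ/2) := by
      intro t ht
      obtain ⟨ht1, ht2⟩ := Finset.mem_Icc.mp ht
      obtain ⟨hDpos, hGpos, hDG⟩ := pert t ht1 ht2
      have hpow : (0:ℝ) < G t ^ ((2:ℝ)+δ) := Real.rpow_pos_of_pos hGpos _
      have hK : K t ≤ C * G t ^ ((2:ℝ)+δ) := (div_le_iff₀ hpow).mp (hratio t ht1 ht2)
      have hHnn : 0 ≤ H t ^ ((2:ℝ)+δ) := Real.rpow_nonneg (hH0 t) _
      have hHGnn : 0 ≤ H t * G t := mul_nonneg (hH0 t) hGpos.le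
      have h9 : H t ^ ((2:ℝ)+δ) * K t ≤ C * (H t * G t) ^ ((2:ℝ)+δ) := by
        calc H t ^ ((2:ℝ)+δ) * K t ≤ H t ^ ((2:ℝ)+δ) * (C * G t ^ ((2:ℝ)+δ)) :=
              mul_le_mul_of_nonneg_left hK hHnn
          _ = C * (H t ^ ((2:ℝ)+δ) * G t ^ ((2:ℝ)+δ)) := by ring
          _ = C * (H t * G t) ^ ((2:ℝ)+δ) := by rw [← Real.mul_rpow (hH0 t) hGpos.le]
      have h10 : ((H t ^ 2 * G t) * G t) ^ ((1:ℝ)+δ/2) = (H t * G t) ^ ((2:ℝ)+δ) := by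
        rw [show (H t ^ 2 * G t) * G t = (H t * G t) ^ 2 from by ring]
        rw [← Real.rpow_natCast (H t * G t) 2, ← Real.rpow_mul hHGnn]
        congr 1
        push_cast
        ring
      have h11 : ((H t ^ 2 * G t) * G t) ^ ((1:ℝ)+δ/2) ≤
          (C'' * (T:ℝ)^(α-1) / (1-α)) ^ ((1:ℝ)+δ/2) :=
        Real.rpow_le_rpow (mul_nonneg hDpos.le hGpos.le) hDG (by positivity)
      calc H t ^ ((2:ℝ)+δ) * K t ≤ C * (H t * G t) ^ ((2:ℝ)+δ) := h9
        _ = C * ((H t ^ 2 * G t) * G t) ^ ((1:ℝ)+δ/2) := by rw [h10]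
        _ ≤ C * (C'' * (T:ℝ)^(α-1) / (1-α)) ^ ((1:ℝ)+δ/2) :=
            mul_le_mul_of_nonneg_left h11 hC.le
    have h12 := Finset.sum_le_card_nsmul (Finset.Icc 1 T)
      (fun t => H t ^ ((2:ℝ)+δ) * K t) _ hterm
    rwa [Nat.card_Icc, Nat.add_sub_cancel, nsmul_eq_mul] at h12

/-- **Theorem 5 (general construction of variance-stabilizing weights).**
Suppose the Riesz representers satisfy `E_{t-1}|γₜ|^{2+δ} / (E_{t-1}[γₜ²])^{2+δ} ≤ C`
and `E_{t-1}[γₜ²] ≤ C' t^α` for some `δ > 0`, `α ∈ [0, δ/(2+δ))` and positive `C, C'`.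
Then the triangular array of variance-stabilizing weights defined by the recursion
`hₜ² E_{t-1}[γₜ²] = (1 - ∑_{s<t} h_s² E_{s-1}[γ_s²]) λₜ` satisfies the general
infinite-sampling, variance-convergence and bounded-moments conditions, provided the
history-adapted allocation rate satisfies `λₜ < 1` for `t < T`, `λ_T = 1` and
`1/(1+T-t) ≤ λₜ ≤ C'' (E_{t-1}[γₜ²])⁻¹ / (t^{-α} + T^{1-α} - t^{1-α})`. -/
theorem general_variance_stabilizing_weights
    {Ω : Type*} [mΩ : MeasurableSpace Ω] (μ : Measure Ω) [IsProbabilityMeasure μ]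
    {𝒲 : Type*} [MeasurableSpace 𝒲]
    (ℱ : Filtration ℕ mΩ)
    (W : ℕ → Ω → 𝒲) (γ : ℕ → Ω → 𝒲 → ℝ) (h lam : ℕ → ℕ → Ω → ℝ)
    (δ α C C' C'' : ℝ)
    (hδ : 0 < δ) (hα0 : 0 ≤ α) (hα1 : α < δ / (2 + δ))
    (hC : 0 < C) (hC' : 0 < C') (hC'' : 0 < C'')
    -- the Riesz representers are history-adapted, measurable and square-integrable
    (hWmeas : ∀ t, Measurable[ℱ t] (W t))
    (hγadapt : ∀ t w', 1 ≤ t → StronglyMeasurable[ℱ (t - 1)] fun ω => γ t ω w')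
    (hγWmeas : ∀ t, Measurable fun ω => γ t ω (W t ω))
    (hγsq : ∀ t, Integrable (fun ω => γ t ω (W t ω) ^ 2) μ)
    -- moment growth conditions on the Riesz representers
    (hmomratio : ∀ (t : ℕ), 1 ≤ t → ∀ᵐ ω ∂μ,
      (μ[(fun ω' => abs (γ t ω' (W t ω')) ^ ((2 : ℝ) + δ))|ℱ (t - 1)]) ω /
        ((μ[(fun ω' => γ t ω' (W t ω') ^ 2)|ℱ (t - 1)]) ω) ^ ((2 : ℝ) + δ) ≤ C)
    (hgrowth : ∀ (t : ℕ), 1 ≤ t → ∀ᵐ ω ∂μ,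
      (μ[(fun ω' => γ t ω' (W t ω') ^ 2)|ℱ (t - 1)]) ω ≤ C' * (t : ℝ) ^ α)
    -- the allocation rate: history-adapted, `< 1` before `T`, `= 1` at `T`, bounded
    (hlam_meas : ∀ T t, 1 ≤ t → t ≤ T → StronglyMeasurable[ℱ (t - 1)] (lam T t))
    (hlam_lt : ∀ T t ω, 1 ≤ t → t < T → lam T t ω < 1)
    (hlam_last : ∀ T ω, 1 ≤ T → lam T T ω = 1)
    (hlam_bounds : ∀ (T t : ℕ), 1 ≤ t → t ≤ T → ∀ᵐ ω ∂μ,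
      1 / (1 + (T : ℝ) - t) ≤ lam T t ω ∧
      lam T t ω ≤ C'' * ((μ[(fun ω' => γ t ω' (W t ω') ^ 2)|ℱ (t - 1)]) ω)⁻¹ /
        ((t : ℝ) ^ (-α) + (T : ℝ) ^ ((1 : ℝ) - α) - (t : ℝ) ^ ((1 : ℝ) - α)))
    -- the variance-stabilizing weights: non-negative, history-adapted, and
    -- defined by the stick-breaking recursion
    (hh_nonneg : ∀ T t ω, 0 ≤ h T t ω)
    (hh_meas : ∀ T t, 1 ≤ t → t ≤ T → StronglyMeasurable[ℱ (t - 1)] (h T t))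
    (hrec : ∀ (T t : ℕ), 1 ≤ t → t ≤ T → ∀ᵐ ω ∂μ,
      (h T t ω) ^ 2 * (μ[(fun ω' => γ t ω' (W t ω') ^ 2)|ℱ (t - 1)]) ω =
        (1 - ∑ s ∈ Finset.Icc 1 (t - 1),
          (h T s ω) ^ 2 * (μ[(fun ω' => γ s ω' (W s ω') ^ 2)|ℱ (s - 1)]) ω) * lam T t ω) :
    -- general infinite-sampling condition
    (∀ M : ℝ, Tendsto (fun T =>
      (μ {ω | (∑ t ∈ Finset.Icc 1 T, h T t ω) ^ 2 ≤
        M * ∫ ω', ∑ t ∈ Finset.Icc 1 T, (h T t ω') ^ 2 * γ t ω' (W t ω') ^ 2 ∂μ}).toReal)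
      atTop (𝓝 0)) ∧
    -- general variance-convergence condition (in Lᵖ for some p > 1)
    (∃ p : ℝ, 1 < p ∧ Tendsto (fun T => ∫ ω,
      abs ((∑ t ∈ Finset.Icc 1 T,
          (h T t ω) ^ 2 * (μ[(fun ω' => γ t ω' (W t ω') ^ 2)|ℱ (t - 1)]) ω) /
          (∫ ω', ∑ t ∈ Finset.Icc 1 T, (h T t ω') ^ 2 * γ t ω' (W t ω') ^ 2 ∂μ) - 1) ^ p ∂μ)
      atTop (𝓝 0)) ∧
    -- general bounded-moments condition (for some δ' > 0)
    (∃ δ' : ℝ, 0 < δ' ∧ ∀ ε : ℝ, 0 < ε → Tendsto (fun T =>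
      (μ {ω | ε ≤
        (∑ t ∈ Finset.Icc 1 T,
          h T t ω ^ ((2 : ℝ) + δ') * (μ[(fun ω' => abs (γ t ω' (W t ω')) ^ ((2 : ℝ) + δ'))|ℱ (t - 1)]) ω) /
          (∫ ω', ∑ t ∈ Finset.Icc 1 T, (h T t ω') ^ 2 * γ t ω' (W t ω') ^ 2 ∂μ) ^ ((1 : ℝ) + δ' / 2)}).toReal)
      atTop (𝓝 0)) := by
  have hα1' : α < 1 := lt_trans hα1 ((div_lt_one (by linarith)).mpr (by linarith))
  have h1α : (0:ℝ) < 1 - α := by linarith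
  -- the key per-horizon facts
  have key : ∀ T : ℕ, 1 ≤ T →
      (∫ ω', ∑ t ∈ Finset.Icc 1 T, (h T t ω') ^ 2 * γ t ω' (W t ω') ^ 2 ∂μ) = 1 ∧
      ∀ᵐ ω ∂μ,
        ((∑ t ∈ Finset.Icc 1 T,
          (h T t ω) ^ 2 * (μ[(fun ω' => γ t ω' (W t ω') ^ 2)|ℱ (t - 1)]) ω) = 1 ∧
        Real.sqrt ((1-α) * (T:ℝ)^((1:ℝ)-α) / C'') ≤ ∑ t ∈ Finset.Icc 1 T, h T t ω ∧
        (∑ t ∈ Finset.Icc 1 T,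
          h T t ω ^ ((2:ℝ)+δ) * (μ[(fun ω' => abs (γ t ω' (W t ω')) ^ ((2:ℝ)+δ))|ℱ (t - 1)]) ω) ≤
          (T:ℝ) * (C * (C'' * (T:ℝ)^(α-1) / (1-α)) ^ ((1:ℝ)+δ/2))) := by
    intro T hT
    have hae : ∀ᵐ ω ∂μ, ∀ t, t ∈ Finset.Icc 1 T →
        ((h T t ω) ^ 2 * (μ[(fun ω' => γ t ω' (W t ω') ^ 2)|ℱ (t - 1)]) ω =
          (1 - ∑ s ∈ Finset.Icc 1 (t - 1),
            (h T s ω) ^ 2 * (μ[(fun ω' => γ s ω' (W s ω') ^ 2)|ℱ (s - 1)]) ω) * lam T t ω) ∧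
        (1 / (1 + (T : ℝ) - t) ≤ lam T t ω ∧
          lam T t ω ≤ C'' * ((μ[(fun ω' => γ t ω' (W t ω') ^ 2)|ℱ (t - 1)]) ω)⁻¹ /
            ((t : ℝ) ^ (-α) + (T : ℝ) ^ ((1 : ℝ) - α) - (t : ℝ) ^ ((1 : ℝ) - α))) ∧
        ((μ[(fun ω' => abs (γ t ω' (W t ω')) ^ ((2 : ℝ) + δ))|ℱ (t - 1)]) ω /
          ((μ[(fun ω' => γ t ω' (W t ω') ^ 2)|ℱ (t - 1)]) ω) ^ ((2 : ℝ) + δ) ≤ C) := by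
      rw [ae_all_iff]
      intro t
      by_cases ht : t ∈ Finset.Icc 1 T
      · obtain ⟨ht1, ht2⟩ := Finset.mem_Icc.mp ht
        filter_upwards [hrec T t ht1 ht2, hlam_bounds T t ht1 ht2, hmomratio t ht1]
          with ω h1 h2 h3
        exact fun _ => ⟨h1, h2, h3⟩
      · filter_upwards with ω h
        exact absurd h ht
    have haepack : ∀ᵐ ω ∂μ,
        ((∑ t ∈ Finset.Icc 1 T,
          (h T t ω) ^ 2 * (μ[(fun ω' => γ t ω' (W t ω') ^ 2)|ℱ (t - 1)]) ω) = 1 ∧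
        (∀ t ∈ Finset.Icc 1 T,
          (h T t ω) ^ 2 * (μ[(fun ω' => γ t ω' (W t ω') ^ 2)|ℱ (t - 1)]) ω ≤ 1) ∧
        Real.sqrt ((1-α) * (T:ℝ)^((1:ℝ)-α) / C'') ≤ ∑ t ∈ Finset.Icc 1 T, h T t ω ∧
        (∑ t ∈ Finset.Icc 1 T,
          h T t ω ^ ((2:ℝ)+δ) * (μ[(fun ω' => abs (γ t ω' (W t ω')) ^ ((2:ℝ)+δ))|ℱ (t - 1)]) ω) ≤
          (T:ℝ) * (C * (C'' * (T:ℝ)^(α-1) / (1-α)) ^ ((1:ℝ)+δ/2))) := by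
      filter_upwards [hae] with ω hω
      exact stick_lemma hT hα0 hα1' hδ hC hC''
        (fun t => h T t ω)
        (fun t => (μ[(fun ω' => γ t ω' (W t ω') ^ 2)|ℱ (t - 1)]) ω)
        (fun t => lam T t ω)
        (fun t => (μ[(fun ω' => abs (γ t ω' (W t ω')) ^ ((2:ℝ)+δ))|ℱ (t - 1)]) ω)
        (fun t => hh_nonneg T t ω)
        (fun t ht1 ht2 => (hω t (Finset.mem_Icc.mpr ⟨ht1, ht2⟩)).1)
        (fun t ht1 ht2 => (hω t (Finset.mem_Icc.mpr ⟨ht1, ht2⟩)).2.1.1)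
        (fun t ht1 ht2 => (hω t (Finset.mem_Icc.mpr ⟨ht1, ht2⟩)).2.1.2)
        (fun t ht1 ht2 => hlam_lt T t ω ht1 ht2)
        (hlam_last T ω hT)
        (fun t ht1 ht2 => (hω t (Finset.mem_Icc.mpr ⟨ht1, ht2⟩)).2.2)
    have hInt : ∀ t ∈ Finset.Icc 1 T,
        Integrable (fun ω => (h T t ω) ^ 2 * γ t ω (W t ω) ^ 2) μ ∧
        Integrable (fun ω =>
          (h T t ω) ^ 2 * (μ[(fun ω' => γ t ω' (W t ω') ^ 2)|ℱ (t - 1)]) ω) μ ∧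
        ∫ ω, (h T t ω) ^ 2 * γ t ω (W t ω) ^ 2 ∂μ =
          ∫ ω, (h T t ω) ^ 2 * (μ[(fun ω' => γ t ω' (W t ω') ^ 2)|ℱ (t - 1)]) ω ∂μ := by
      intro t ht
      obtain ⟨ht1, ht2⟩ := Finset.mem_Icc.mp ht
      refine pullout_aux (ℱ.le (t-1)) (hh_meas T t ht1 ht2) (hγsq t)
        (ae_of_all μ fun ω => sq_nonneg _) ?_
      filter_upwards [haepack] with ω hω
      exact hω.2.1 t ht
    have hI : (∫ ω', ∑ t ∈ Finset.Icc 1 T, (h T t ω') ^ 2 * γ t ω' (W t ω') ^ 2 ∂μ) = 1 := by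
      rw [integral_finset_sum _ (fun t ht => (hInt t ht).1)]
      rw [Finset.sum_congr rfl (fun t ht => (hInt t ht).2.2)]
      rw [← integral_finset_sum _ (fun t ht => (hInt t ht).2.1)]
      rw [integral_congr_ae (g := fun _ => (1:ℝ)) (haepack.mono fun ω hω => hω.1)]
      simp
    exact ⟨hI, haepack.mono fun ω hω => ⟨hω.1, hω.2.2.1, hω.2.2.2⟩⟩
  refine ⟨?_, ⟨2, one_lt_two, ?_⟩, ⟨δ, hδ, ?_⟩⟩
  -- infinite sampling
  · intro M
    have hgrow : Tendsto (fun T : ℕ => (1-α) * (T:ℝ)^((1:ℝ)-α) / C'') atTop atTop :=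
      (((tendsto_rpow_atTop h1α).comp tendsto_natCast_atTop_atTop).const_mul_atTop h1α).atTop_div_const hC''
    have hev : ∀ᶠ T : ℕ in atTop, (μ {ω | (∑ t ∈ Finset.Icc 1 T, h T t ω) ^ 2 ≤
        M * ∫ ω', ∑ t ∈ Finset.Icc 1 T, (h T t ω') ^ 2 * γ t ω' (W t ω') ^ 2 ∂μ}).toReal = 0 := by
      filter_upwards [hgrow.eventually_gt_atTop M, eventually_ge_atTop 1] with T hM hT1
      obtain ⟨hI, hae2⟩ := key T hT1
      have hnull := ae_iff.mp hae2
      have hsub : {ω | (∑ t ∈ Finset.Icc 1 T, h T t ω) ^ 2 ≤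
          M * ∫ ω', ∑ t ∈ Finset.Icc 1 T, (h T t ω') ^ 2 * γ t ω' (W t ω') ^ 2 ∂μ} ⊆
          {ω | ¬((∑ t ∈ Finset.Icc 1 T,
            (h T t ω) ^ 2 * (μ[(fun ω' => γ t ω' (W t ω') ^ 2)|ℱ (t - 1)]) ω) = 1 ∧
            Real.sqrt ((1-α) * (T:ℝ)^((1:ℝ)-α) / C'') ≤ ∑ t ∈ Finset.Icc 1 T, h T t ω ∧
            (∑ t ∈ Finset.Icc 1 T,
              h T t ω ^ ((2:ℝ)+δ) *
                (μ[(fun ω' => abs (γ t ω' (W t ω')) ^ ((2:ℝ)+δ))|ℱ (t - 1)]) ω) ≤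
              (T:ℝ) * (C * (C'' * (T:ℝ)^(α-1) / (1-α)) ^ ((1:ℝ)+δ/2)))} := by
        intro ω hmem hP
        obtain ⟨-, hBnd, -⟩ := hP
        have hκnn : (0:ℝ) ≤ (1-α) * (T:ℝ)^((1:ℝ)-α) / C'' :=
          div_nonneg (mul_nonneg h1α.le (Real.rpow_nonneg (Nat.cast_nonneg T) _)) hC''.le
        have hsq : (1-α) * (T:ℝ)^((1:ℝ)-α) / C'' ≤ (∑ t ∈ Finset.Icc 1 T, h T t ω) ^ 2 := by
          have := pow_le_pow_left₀ (Real.sqrt_nonneg _) hBnd 2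
          rwa [Real.sq_sqrt hκnn] at this
        rw [Set.mem_setOf_eq, hI, mul_one] at hmem
        linarith
      rw [measure_mono_null hsub hnull]
      simp
    exact Tendsto.congr' (hev.mono fun T hT => hT.symm) tendsto_const_nhds
  -- variance convergence
  · have hev : ∀ᶠ T : ℕ in atTop, (∫ ω,
        abs ((∑ t ∈ Finset.Icc 1 T,
          (h T t ω) ^ 2 * (μ[(fun ω' => γ t ω' (W t ω') ^ 2)|ℱ (t - 1)]) ω) /
          (∫ ω', ∑ t ∈ Finset.Icc 1 T, (h T t ω') ^ 2 * γ t ω' (W t ω') ^ 2 ∂μ) - 1) ^ (2:ℝ) ∂μ)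
        = 0 := by
      filter_upwards [eventually_ge_atTop 1] with T hT1
      obtain ⟨hI, hae2⟩ := key T hT1
      have hz : (fun ω => abs ((∑ t ∈ Finset.Icc 1 T,
          (h T t ω) ^ 2 * (μ[(fun ω' => γ t ω' (W t ω') ^ 2)|ℱ (t - 1)]) ω) /
          (∫ ω', ∑ t ∈ Finset.Icc 1 T, (h T t ω') ^ 2 * γ t ω' (W t ω') ^ 2 ∂μ) - 1) ^ (2:ℝ))
          =ᵐ[μ] fun _ => (0:ℝ) := by
        filter_upwards [hae2] with ω hω
        rw [hω.1, hI, div_one, sub_self, abs_zero, Real.zero_rpow (by norm_num)]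
      rw [integral_congr_ae hz, integral_zero]
    exact Tendsto.congr' (hev.mono fun T hT => hT.symm) tendsto_const_nhds
  -- bounded moments
  · intro ε hε
    have hα2 : α * (2+δ) < δ := (lt_div_iff₀ (by linarith : (0:ℝ) < 2+δ)).mp hα1
    have he : 1 + (α-1) * ((1:ℝ)+δ/2) < 0 := by nlinarith [hα2]
    have htend : Tendsto (fun T : ℕ =>
        (T:ℝ) * (C * (C'' * (T:ℝ)^(α-1) / (1-α)) ^ ((1:ℝ)+δ/2))) atTop (𝓝 0) := by
      have h2 : Tendsto (fun x : ℝ => x ^ (-(-(1 + (α-1) * ((1:ℝ)+δ/2))))) atTop (𝓝 0) :=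
        tendsto_rpow_neg_atTop (by linarith)
      rw [neg_neg] at h2
      have h3 := (h2.comp tendsto_natCast_atTop_atTop).const_mul
        (C * (C''/(1-α)) ^ ((1:ℝ)+δ/2))
      rw [mul_zero] at h3
      refine h3.congr' ?_
      filter_upwards [eventually_ge_atTop 1] with T hT1
      have hT0 : (0:ℝ) < T := by exact_mod_cast hT1
      show C * (C''/(1-α)) ^ ((1:ℝ)+δ/2) * ((T:ℝ) ^ (1 + (α-1) * ((1:ℝ)+δ/2))) = _
      rw [show C'' * (T:ℝ)^(α-1) / (1-α) = (C''/(1-α)) * (T:ℝ)^(α-1) from by ring]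
      rw [Real.mul_rpow (by positivity) (Real.rpow_nonneg hT0.le _)]
      rw [← Real.rpow_mul hT0.le]
      rw [Real.rpow_add hT0, Real.rpow_one]
      ring
    have hev : ∀ᶠ T : ℕ in atTop, (μ {ω | ε ≤
        (∑ t ∈ Finset.Icc 1 T,
          h T t ω ^ ((2 : ℝ) + δ) *
            (μ[(fun ω' => abs (γ t ω' (W t ω')) ^ ((2 : ℝ) + δ))|ℱ (t - 1)]) ω) /
          (∫ ω', ∑ t ∈ Finset.Icc 1 T,
            (h T t ω') ^ 2 * γ t ω' (W t ω') ^ 2 ∂μ) ^ ((1 : ℝ) + δ / 2)}).toReal = 0 := by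
      filter_upwards [htend.eventually_lt_const hε, eventually_ge_atTop 1] with T hBe hT1
      obtain ⟨hI, hae2⟩ := key T hT1
      have hnull := ae_iff.mp hae2
      have hsub : {ω | ε ≤
          (∑ t ∈ Finset.Icc 1 T,
            h T t ω ^ ((2 : ℝ) + δ) *
              (μ[(fun ω' => abs (γ t ω' (W t ω')) ^ ((2 : ℝ) + δ))|ℱ (t - 1)]) ω) /
            (∫ ω', ∑ t ∈ Finset.Icc 1 T,
              (h T t ω') ^ 2 * γ t ω' (W t ω') ^ 2 ∂μ) ^ ((1 : ℝ) + δ / 2)} ⊆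
          {ω | ¬((∑ t ∈ Finset.Icc 1 T,
            (h T t ω) ^ 2 * (μ[(fun ω' => γ t ω' (W t ω') ^ 2)|ℱ (t - 1)]) ω) = 1 ∧
            Real.sqrt ((1-α) * (T:ℝ)^((1:ℝ)-α) / C'') ≤ ∑ t ∈ Finset.Icc 1 T, h T t ω ∧
            (∑ t ∈ Finset.Icc 1 T,
              h T t ω ^ ((2:ℝ)+δ) *
                (μ[(fun ω' => abs (γ t ω' (W t ω')) ^ ((2:ℝ)+δ))|ℱ (t - 1)]) ω) ≤
              (T:ℝ) * (C * (C'' * (T:ℝ)^(α-1) / (1-α)) ^ ((1:ℝ)+δ/2)))} := by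
        intro ω hmem hP
        obtain ⟨-, -, hCc⟩ := hP
        rw [Set.mem_setOf_eq, hI, Real.one_rpow, div_one] at hmem
        linarith
      rw [measure_mono_null hsub hnull]
      simp
    exact Tendsto.congr' (hev.mono fun T hT => hT.symm) tendsto_const_nhds
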